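/- If the odd part fᵒ of f satisfies ‖fᵒ(x)+fᵒ(y)‖ ≤ ‖fᵒ(x+y)‖ for all x, y ∈ G, then fᵒ is additive: fᵒ(x+y) = fᵒ(x)+fᵒ(y) for all x, y ∈ G. -/

import Mathlib

theorem stmt11 {G E : Type*} [AddCommGroup G] [NormedAddCommGroup E]
    [InnerProductSpace ℝ E] (h : G → E)
    (hh : ∀ x y : G, ‖h x + h y‖ ≤ ‖h (x + y)‖) :
    ∀ x y : G, h (x + y) = h x + h y := by
  have h0 : h 0 = 0 := by
    have := hh 0 0
    rw [add_zero] at this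
    have h2 : ‖h 0 + h 0‖ = 2 * ‖h 0‖ := by
      rw [← two_smul ℝ (h 0), norm_smul]; simp
    rw [h2] at this
    have : ‖h 0‖ ≤ 0 := by linarith
    simpa [norm_le_zero_iff] using this
  have hneg : ∀ x : G, h (-x) = -h x := by
    intro x
    have := hh x (-x)
    rw [add_neg_cancel, h0, norm_zero] at this
    have : h x + h (-x) = 0 := by
      simpa [norm_le_zero_iff] using this
    exact eq_neg_of_add_eq_zero_right this
  intro x y
  set u := h (x + y) with hu
  set v := h x + h y with hv
  have h1 : ‖u - h y‖ ≤ ‖h x‖ := by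
    have := hh (x + y) (-y)
    rw [hneg, add_neg_cancel_right] at this
    simpa [sub_eq_add_neg] using this
  have h2 : ‖u - h x‖ ≤ ‖h y‖ := by
    have := hh (x + y) (-x)
    rw [hneg] at this
    have e : x + y + -x = y := by abel
    rw [e] at this
    simpa [sub_eq_add_neg] using this
  have hvu : ‖v‖ ≤ ‖u‖ := hh x y
  have e1 : ‖u - h y‖ ^ 2 = ‖u‖ ^ 2 - 2 * inner ℝ u (h y) + ‖h y‖ ^ 2 :=
    norm_sub_sq_real u (h y)
  have e2 : ‖u - h x‖ ^ 2 = ‖u‖ ^ 2 - 2 * inner ℝ u (h x) + ‖h x‖ ^ 2 :=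
    norm_sub_sq_real u (h x)
  have e3 : ‖u - v‖ ^ 2 = ‖u‖ ^ 2 - 2 * inner ℝ u v + ‖v‖ ^ 2 :=
    norm_sub_sq_real u v
  have e4 : (inner ℝ u v : ℝ) = inner ℝ u (h x) + inner ℝ u (h y) := by
    rw [hv, inner_add_right]
  have q1 : ‖u - h y‖ ^ 2 ≤ ‖h x‖ ^ 2 := by
    apply sq_le_sq' _ h1; linarith [norm_nonneg (u - h y)]
  have q2 : ‖u - h x‖ ^ 2 ≤ ‖h y‖ ^ 2 := by
    apply sq_le_sq' _ h2; linarith [norm_nonneg (u - h x)]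
  have q3 : ‖v‖ ^ 2 ≤ ‖u‖ ^ 2 := by
    apply sq_le_sq' _ hvu; linarith [norm_nonneg v]
  have key : ‖u‖ ^ 2 ≤ inner ℝ u v := by
    rw [e4]; nlinarith
  have hle : ‖u - v‖ ^ 2 ≤ 0 := by nlinarith
  have : ‖u - v‖ = 0 := by nlinarith [norm_nonneg (u - v)]
  have := norm_eq_zero.mp this
  exact sub_eq_zero.mp this
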